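/- The second moment of h = (X − Y)ᵀ(X′ − Y′) satisfies E[h²] = tr((2Σ + δδᵀ)²), and consequently Var(h) = tr((2Σ + δδᵀ)²) − ‖δ‖⁴. -/

import Mathlib

open MeasureTheory ProbabilityTheory

private lemma memL2_integrable_mul {Ω : Type} [MeasurableSpace Ω] {μ : Measure Ω}
    {f g : Ω → ℝ} (hf : MemLp f 2 μ) (hg : MemLp g 2 μ) :
    Integrable (fun ω => f ω * g ω) μ := by
  have h : MemLp (f • g) 1 μ :=
    haveI : ENNReal.HolderTriple 2 2 1 := ⟨by rw [inv_one]; exact ENNReal.inv_two_add_inv_two⟩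
    MemLp.smul (p := 2) (q := 2) (r := 1) hg hf
  exact memLp_one_iff_integrable.mp h

private lemma integral_mul_sub_sub {Ω : Type} [MeasurableSpace Ω] {μ : Measure Ω}
    [IsProbabilityMeasure μ] {f f' g g' : Ω → ℝ}
    (hf : MemLp f 2 μ) (hf' : MemLp f' 2 μ) (hg : MemLp g 2 μ) (hg' : MemLp g' 2 μ)
    (hfg' : IndepFun f g' μ) (hgf' : IndepFun g f' μ) :
    ∫ ω, (f ω - g ω) * (f' ω - g' ω) ∂μ =
      (∫ ω, f ω * f' ω ∂μ) + (∫ ω, g ω * g' ω ∂μ)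
        - (∫ ω, f ω ∂μ) * (∫ ω, g' ω ∂μ) - (∫ ω, g ω ∂μ) * (∫ ω, f' ω ∂μ) := by
  have i1 : Integrable (fun ω => f ω * f' ω) μ := memL2_integrable_mul hf hf'
  have i2 : Integrable (fun ω => g ω * g' ω) μ := memL2_integrable_mul hg hg'
  have i3 : Integrable (fun ω => f ω * g' ω) μ := memL2_integrable_mul hf hg'
  have i4 : Integrable (fun ω => g ω * f' ω) μ := memL2_integrable_mul hg hf'
  have i12 : Integrable (fun ω => f ω * f' ω + g ω * g' ω) μ := i1.add i2
  have i123 : Integrable (fun ω => f ω * f' ω + g ω * g' ω - f ω * g' ω) μ := i12.sub i3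
  have e3 : ∫ ω, f ω * g' ω ∂μ = (∫ ω, f ω ∂μ) * ∫ ω, g' ω ∂μ :=
    hfg'.integral_fun_mul_eq_mul_integral hf.aestronglyMeasurable hg'.aestronglyMeasurable
  have e4 : ∫ ω, g ω * f' ω ∂μ = (∫ ω, g ω ∂μ) * ∫ ω, f' ω ∂μ :=
    hgf'.integral_fun_mul_eq_mul_integral hg.aestronglyMeasurable hf'.aestronglyMeasurable
  have hfun : (fun ω => (f ω - g ω) * (f' ω - g' ω))
      = fun ω => f ω * f' ω + g ω * g' ω - f ω * g' ω - g ω * f' ω := by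
    funext ω; ring
  rw [hfun, integral_sub i123 i4, integral_sub i12 i3, integral_add i1 i2, e3, e4]

private lemma integral_sub_const_mul {Ω : Type} [MeasurableSpace Ω] {μ : Measure Ω}
    [IsProbabilityMeasure μ] {f g : Ω → ℝ} (c1 c2 : ℝ)
    (hf : MemLp f 2 μ) (hg : MemLp g 2 μ) :
    ∫ ω, (f ω - c1) * (g ω - c2) ∂μ =
      ∫ ω, f ω * g ω ∂μ - c2 * ∫ ω, f ω ∂μ - c1 * ∫ ω, g ω ∂μ + c1 * c2 := by
  have i1 : Integrable (fun ω => f ω * g ω) μ := memL2_integrable_mul hf hg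
  have i2 : Integrable f μ := hf.integrable one_le_two
  have i3 : Integrable g μ := hg.integrable one_le_two
  have i2' : Integrable (fun ω => c2 * f ω) μ := i2.const_mul c2
  have i3' : Integrable (fun ω => c1 * g ω) μ := i3.const_mul c1
  have i12 : Integrable (fun ω => f ω * g ω - c2 * f ω) μ := i1.sub i2'
  have i123 : Integrable (fun ω => f ω * g ω - c2 * f ω - c1 * g ω) μ := i12.sub i3'
  have hfun : (fun ω => (f ω - c1) * (g ω - c2))
      = fun ω => f ω * g ω - c2 * f ω - c1 * g ω + c1 * c2 := by
    funext ω; ring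
  rw [hfun, integral_add i123 (integrable_const _), integral_sub i12 i3',
    integral_sub i1 i2', integral_const_mul, integral_const_mul, integral_const]
  simp
/-- Second moment of `h = (X − Y)ᵀ(X′ − Y′)` for mutually independent `X, X′ ~ P`,
`Y, Y′ ~ Q`: `E[h²] = tr((2Σ + δδᵀ)²)`, and consequently
`Var(h) = tr((2Σ + δδᵀ)²) − ‖δ‖⁴`. -/
theorem h_statistic_second_moment
    (d : ℕ) (Ω : Type) [MeasurableSpace Ω] (μ : Measure Ω) [IsProbabilityMeasure μ]
    (X X' Y Y' : Ω → Fin d → ℝ)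
    (hmeas : ∀ W ∈ [X, X', Y, Y'], Measurable W)
    (hindep : iIndepFun ![X, Y, X', Y'] μ)
    (hXX' : IdentDistrib X X' μ μ) (hYY' : IdentDistrib Y Y' μ μ)
    (hL2 : ∀ W ∈ [X, X', Y, Y'], ∀ j, MemLp (fun ω => W ω j) 2 μ)
    (μ₁ μ₂ : Fin d → ℝ)
    (hμ₁ : ∀ j, μ₁ j = ∫ ω, X ω j ∂μ) (hμ₂ : ∀ j, μ₂ j = ∫ ω, Y ω j ∂μ)
    (S₁ S₂ S : Matrix (Fin d) (Fin d) ℝ)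
    (hS₁ : ∀ j k, S₁ j k = ∫ ω, (X ω j - μ₁ j) * (X ω k - μ₁ k) ∂μ)
    (hS₂ : ∀ j k, S₂ j k = ∫ ω, (Y ω j - μ₂ j) * (Y ω k - μ₂ k) ∂μ)
    (hS : S = (1 / 2 : ℝ) • (S₁ + S₂))
    (δ : Fin d → ℝ) (hδ : δ = fun j => μ₁ j - μ₂ j) :
    (∫ ω, (∑ j, (X ω j - Y ω j) * (X' ω j - Y' ω j)) ^ 2 ∂μ) =
      Matrix.trace (((2 : ℝ) • S + Matrix.vecMulVec δ δ) *
        ((2 : ℝ) • S + Matrix.vecMulVec δ δ)) ∧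
    (∫ ω, (∑ j, (X ω j - Y ω j) * (X' ω j - Y' ω j)) ^ 2 ∂μ) -
        (∫ ω, ∑ j, (X ω j - Y ω j) * (X' ω j - Y' ω j) ∂μ) ^ 2 =
      Matrix.trace (((2 : ℝ) • S + Matrix.vecMulVec δ δ) *
        ((2 : ℝ) • S + Matrix.vecMulVec δ δ)) - (∑ j, δ j ^ 2) ^ 2 := by
  classical
  have mX : Measurable X := hmeas X (by simp)
  have mX' : Measurable X' := hmeas X' (by simp)
  have mY : Measurable Y := hmeas Y (by simp)
  have mY' : Measurable Y' := hmeas Y' (by simp)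
  have hm : ∀ i, Measurable (![X, Y, X', Y'] i) := by
    intro i; fin_cases i <;> assumption
  have L2X : ∀ j, MemLp (fun ω => X ω j) 2 μ := hL2 X (by simp)
  have L2X' : ∀ j, MemLp (fun ω => X' ω j) 2 μ := hL2 X' (by simp)
  have L2Y : ∀ j, MemLp (fun ω => Y ω j) 2 μ := hL2 Y (by simp)
  have L2Y' : ∀ j, MemLp (fun ω => Y' ω j) 2 μ := hL2 Y' (by simp)
  have L2a : ∀ j, MemLp (fun ω => X ω j - Y ω j) 2 μ := fun j => (L2X j).sub (L2Y j)
  have L2b : ∀ j, MemLp (fun ω => X' ω j - Y' ω j) 2 μ := fun j => (L2X' j).sub (L2Y' j)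
  -- independence facts
  have hXY : IndepFun X Y μ := hindep.indepFun (show (0 : Fin 4) ≠ 1 by decide)
  have hX'Y' : IndepFun X' Y' μ := hindep.indepFun (show (2 : Fin 4) ≠ 3 by decide)
  have hpair : IndepFun (fun ω => (X ω, Y ω)) (fun ω => (X' ω, Y' ω)) μ :=
    hindep.indepFun_prodMk_prodMk hm 0 1 2 3 (by decide) (by decide) (by decide) (by decide)
  have hφmeas : ∀ j k : Fin d,
      Measurable (fun p : (Fin d → ℝ) × (Fin d → ℝ) => (p.1 j - p.2 j) * (p.1 k - p.2 k)) :=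
    fun j k =>
      (((measurable_pi_apply j).comp measurable_fst).sub
        ((measurable_pi_apply j).comp measurable_snd)).mul
      (((measurable_pi_apply k).comp measurable_fst).sub
        ((measurable_pi_apply k).comp measurable_snd))
  have hψmeas : ∀ j : Fin d,
      Measurable (fun p : (Fin d → ℝ) × (Fin d → ℝ) => p.1 j - p.2 j) :=
    fun j => ((measurable_pi_apply j).comp measurable_fst).sub
      ((measurable_pi_apply j).comp measurable_snd)
  -- identdistrib integrals
  have iX' : ∀ j, ∫ ω, X' ω j ∂μ = μ₁ j := fun j => by
    rw [hμ₁ j]; exact ((hXX'.comp (measurable_pi_apply j)).integral_eq).symm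
  have iY' : ∀ j, ∫ ω, Y' ω j ∂μ = μ₂ j := fun j => by
    rw [hμ₂ j]; exact ((hYY'.comp (measurable_pi_apply j)).integral_eq).symm
  have iXX' : ∀ j k, ∫ ω, X' ω j * X' ω k ∂μ = ∫ ω, X ω j * X ω k ∂μ := fun j k =>
    ((hXX'.comp ((measurable_pi_apply j).mul (measurable_pi_apply k))).integral_eq).symm
  have iYY' : ∀ j k, ∫ ω, Y' ω j * Y' ω k ∂μ = ∫ ω, Y ω j * Y ω k ∂μ := fun j k =>
    ((hYY'.comp ((measurable_pi_apply j).mul (measurable_pi_apply k))).integral_eq).symm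
  -- second moments of components
  have hm1 : ∀ j k, ∫ ω, X ω j * X ω k ∂μ = S₁ j k + μ₁ j * μ₁ k := by
    intro j k
    have := integral_sub_const_mul (μ := μ) (μ₁ j) (μ₁ k) (L2X j) (L2X k)
    rw [← hμ₁ j, ← hμ₁ k] at this
    rw [← hS₁ j k] at this
    linarith [this]
  have hm2 : ∀ j k, ∫ ω, Y ω j * Y ω k ∂μ = S₂ j k + μ₂ j * μ₂ k := by
    intro j k
    have := integral_sub_const_mul (μ := μ) (μ₂ j) (μ₂ k) (L2Y j) (L2Y k)
    rw [← hμ₂ j, ← hμ₂ k, ← hS₂ j k] at this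
    linarith [this]
  -- expectation of a_j a_k and b_j b_k
  have EA : ∀ j k, ∫ ω, (X ω j - Y ω j) * (X ω k - Y ω k) ∂μ
      = S₁ j k + S₂ j k + δ j * δ k := by
    intro j k
    rw [integral_mul_sub_sub (L2X j) (L2X k) (L2Y j) (L2Y k)
      (hXY.comp (measurable_pi_apply j) (measurable_pi_apply k))
      (hXY.symm.comp (measurable_pi_apply j) (measurable_pi_apply k)),
      hm1 j k, hm2 j k, ← hμ₁ j, ← hμ₁ k, ← hμ₂ j, ← hμ₂ k, hδ]
    ring
  have EB : ∀ j k, ∫ ω, (X' ω j - Y' ω j) * (X' ω k - Y' ω k) ∂μ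
      = S₁ j k + S₂ j k + δ j * δ k := by
    intro j k
    rw [integral_mul_sub_sub (L2X' j) (L2X' k) (L2Y' j) (L2Y' k)
      (hX'Y'.comp (measurable_pi_apply j) (measurable_pi_apply k))
      (hX'Y'.symm.comp (measurable_pi_apply j) (measurable_pi_apply k)),
      iXX' j k, iYY' j k, hm1 j k, hm2 j k, iX' j, iX' k, iY' j, iY' k, hδ]
    ring
  -- integrability of products
  have iaa : ∀ j k, Integrable (fun ω => (X ω j - Y ω j) * (X ω k - Y ω k)) μ :=
    fun j k => memL2_integrable_mul (L2a j) (L2a k)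
  have ibb : ∀ j k, Integrable (fun ω => (X' ω j - Y' ω j) * (X' ω k - Y' ω k)) μ :=
    fun j k => memL2_integrable_mul (L2b j) (L2b k)
  have hind4 : ∀ j k, IndepFun (fun ω => (X ω j - Y ω j) * (X ω k - Y ω k))
      (fun ω => (X' ω j - Y' ω j) * (X' ω k - Y' ω k)) μ :=
    fun j k => hpair.comp (hφmeas j k) (hφmeas j k)
  have E4 : ∀ j k, ∫ ω, ((X ω j - Y ω j) * (X ω k - Y ω k))
        * ((X' ω j - Y' ω j) * (X' ω k - Y' ω k)) ∂μ
      = (S₁ j k + S₂ j k + δ j * δ k) ^ 2 := by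
    intro j k
    have h : ∫ ω, ((X ω j - Y ω j) * (X ω k - Y ω k))
          * ((X' ω j - Y' ω j) * (X' ω k - Y' ω k)) ∂μ
        = (∫ ω, (X ω j - Y ω j) * (X ω k - Y ω k) ∂μ)
          * ∫ ω, (X' ω j - Y' ω j) * (X' ω k - Y' ω k) ∂μ :=
      (hind4 j k).integral_fun_mul_eq_mul_integral (iaa j k).aestronglyMeasurable (ibb j k).aestronglyMeasurable
    rw [h, EA j k, EB j k, sq]
  have i4 : ∀ j k, Integrable (fun ω => ((X ω j - Y ω j) * (X ω k - Y ω k))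
      * ((X' ω j - Y' ω j) * (X' ω k - Y' ω k))) μ :=
    fun j k => (hind4 j k).integrable_mul (iaa j k) (ibb j k)
  -- second moment
  have hpt : (fun ω => (∑ j, (X ω j - Y ω j) * (X' ω j - Y' ω j)) ^ 2)
      = fun ω => ∑ j, ∑ k, ((X ω j - Y ω j) * (X ω k - Y ω k))
        * ((X' ω j - Y' ω j) * (X' ω k - Y' ω k)) := by
    funext ω
    rw [sq, Finset.sum_mul_sum]
    exact Finset.sum_congr rfl fun j _ => Finset.sum_congr rfl fun k _ => by ring
  have hsecond : ∫ ω, (∑ j, (X ω j - Y ω j) * (X' ω j - Y' ω j)) ^ 2 ∂μ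
      = ∑ j, ∑ k, (S₁ j k + S₂ j k + δ j * δ k) ^ 2 := by
    rw [hpt, integral_finset_sum _ (fun j _ => integrable_finset_sum _ (fun k _ => i4 j k))]
    exact Finset.sum_congr rfl fun j _ => by
      rw [integral_finset_sum _ (fun k _ => i4 j k)]
      exact Finset.sum_congr rfl fun k _ => E4 j k
  -- trace
  have hM : ∀ j k, ((2 : ℝ) • S + Matrix.vecMulVec δ δ) j k
      = S₁ j k + S₂ j k + δ j * δ k := by
    intro j k
    simp only [hS, Matrix.add_apply, Matrix.smul_apply, Matrix.vecMulVec_apply, smul_eq_mul]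
    ring
  have hsymm : ∀ j k, S₁ j k + S₂ j k + δ j * δ k = S₁ k j + S₂ k j + δ k * δ j := by
    intro j k
    have h1 : S₁ j k = S₁ k j := by
      rw [hS₁ j k, hS₁ k j]
      exact integral_congr_ae (Filter.Eventually.of_forall fun ω => mul_comm _ _)
    have h2 : S₂ j k = S₂ k j := by
      rw [hS₂ j k, hS₂ k j]
      exact integral_congr_ae (Filter.Eventually.of_forall fun ω => mul_comm _ _)
    rw [h1, h2, mul_comm (δ j)]
  have htrace : Matrix.trace (((2 : ℝ) • S + Matrix.vecMulVec δ δ) *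
        ((2 : ℝ) • S + Matrix.vecMulVec δ δ))
      = ∑ j, ∑ k, (S₁ j k + S₂ j k + δ j * δ k) ^ 2 := by
    rw [Matrix.trace]
    simp only [Matrix.diag_apply, Matrix.mul_apply]
    exact Finset.sum_congr rfl fun j _ => Finset.sum_congr rfl fun k _ => by
      rw [hM j k, hM k j, ← hsymm j k, sq]
  -- first moment
  have hindab : ∀ j, IndepFun (fun ω => X ω j - Y ω j) (fun ω => X' ω j - Y' ω j) μ :=
    fun j => hpair.comp (hψmeas j) (hψmeas j)
  have iA : ∀ j, ∫ ω, (X ω j - Y ω j) ∂μ = δ j := fun j => by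
    rw [integral_sub ((L2X j).integrable one_le_two) ((L2Y j).integrable one_le_two),
      ← hμ₁ j, ← hμ₂ j, hδ]
  have iB : ∀ j, ∫ ω, (X' ω j - Y' ω j) ∂μ = δ j := fun j => by
    rw [integral_sub ((L2X' j).integrable one_le_two) ((L2Y' j).integrable one_le_two),
      iX' j, iY' j, hδ]
  have iab : ∀ j, Integrable (fun ω => (X ω j - Y ω j) * (X' ω j - Y' ω j)) μ :=
    fun j => memL2_integrable_mul (L2a j) (L2b j)
  have hfirst : ∫ ω, ∑ j, (X ω j - Y ω j) * (X' ω j - Y' ω j) ∂μ = ∑ j, δ j ^ 2 := by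
    rw [integral_finset_sum _ (fun j _ => iab j)]
    refine Finset.sum_congr rfl fun j _ => ?_
    have h : ∫ ω, (X ω j - Y ω j) * (X' ω j - Y' ω j) ∂μ
        = (∫ ω, X ω j - Y ω j ∂μ) * ∫ ω, X' ω j - Y' ω j ∂μ :=
      (hindab j).integral_fun_mul_eq_mul_integral (L2a j).aestronglyMeasurable (L2b j).aestronglyMeasurable
    rw [h, iA j, iB j, sq]
  refine ⟨hsecond.trans htrace.symm, ?_⟩
  rw [hsecond, htrace, hfirst]
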